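/- Cartan-type commutation for the quantum Koszul differential: For every X ∈ g, the deformed representation operator ρ_X commutes with the quantum Koszul differential ∂̂: ρ_X ∂̂ − ∂̂ ρ_X = 0. This follows from the Cartan homotopy formula ρ_X = i_X δ̂ + δ̂ i_X with the insertion derivation i_X = Σ_a X^a ∂/∂ξ^a, together with δ̂∂̂ + ∂̂δ̂ = 0 and [i_X, ∂̂] = 0. -/

import Mathlib

open scoped BigOperators

namespace QuantumKoszul

variable {R : Type*} [Ring R] {ℓ : ℕ}

/-- Coordinate model for the quantum Koszul chains `K_•[[ν]] = A[[ν]] ⊗ Λ g`: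
the coefficient of the antighost monomial `ξ_T` (written in increasing order), with
values in the star-product algebra `R = C^∞(M)[[ν]]`. -/
abbrev OmegaK (R : Type*) (ℓ : ℕ) : Type _ := Finset (Fin ℓ) → R

/-- The odd left derivative `∂/∂ξ_a` with respect to the antighost `ξ_a`. -/
def dAgK (a : Fin ℓ) (F : OmegaK R ℓ) : OmegaK R ℓ :=
  fun T => if a ∈ T then 0
    else ((-1 : ℤ) ^ (T.filter (fun t => t < a)).card) • F (insert a T)

/-- Left multiplication by the antighost `ξ_a`. -/
def LAgK (a : Fin ℓ) (F : OmegaK R ℓ) : OmegaK R ℓ :=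
  fun T => if a ∈ T then
    ((-1 : ℤ) ^ (T.filter (fun t => t < a)).card) • F (T.erase a) else 0

end QuantumKoszul

open QuantumKoszul

namespace QKAux
open QuantumKoszul Finset
variable {R : Type*} [Ring R] {ℓ : ℕ}

lemma sgn_insert (x a : Fin ℓ) (T : Finset (Fin ℓ)) (hx : x ∉ T) :
    ((-1:ℤ) ^ (((insert x T).filter (fun t => t < a)).card)) =
      (if x < a then -1 else 1) * (-1:ℤ) ^ ((T.filter (fun t => t < a)).card) := by
  rw [Finset.filter_insert]
  by_cases h : x < a
  · rw [if_pos h, if_pos h,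
      Finset.card_insert_of_notMem (fun hc => hx (Finset.mem_of_mem_filter _ hc)),
      pow_succ]
    ring
  · rw [if_neg h, if_neg h, one_mul]

lemma sgn_erase (x a : Fin ℓ) (T : Finset (Fin ℓ)) (hx : x ∈ T) :
    ((-1:ℤ) ^ (((T.erase x).filter (fun t => t < a)).card)) =
      (if x < a then -1 else 1) * (-1:ℤ) ^ ((T.filter (fun t => t < a)).card) := by
  have h := sgn_insert x a (T.erase x) (Finset.notMem_erase x T)
  rw [Finset.insert_erase hx] at h
  rw [h]
  by_cases hxa : x < a
  · rw [if_pos hxa]; ring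
  · rw [if_neg hxa]; ring

lemma dAgK_zero (a : Fin ℓ) : dAgK a (0 : OmegaK R ℓ) = 0 := by
  funext T; by_cases h : a ∈ T <;> simp [dAgK, h]

lemma LAgK_zero (a : Fin ℓ) : LAgK a (0 : OmegaK R ℓ) = 0 := by
  funext T; by_cases h : a ∈ T <;> simp [LAgK, h]

lemma dAgK_add (a : Fin ℓ) (F G : OmegaK R ℓ) :
    dAgK a (F + G) = dAgK a F + dAgK a G := by
  funext T; by_cases h : a ∈ T <;> simp [dAgK, h, smul_add]

lemma LAgK_add (a : Fin ℓ) (F G : OmegaK R ℓ) :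
    LAgK a (F + G) = LAgK a F + LAgK a G := by
  funext T; by_cases h : a ∈ T <;> simp [LAgK, h, smul_add]

lemma dAgK_neg (a : Fin ℓ) (F : OmegaK R ℓ) : dAgK a (-F) = -(dAgK a F) := by
  funext T; by_cases h : a ∈ T <;> simp [dAgK, h]

lemma LAgK_neg (a : Fin ℓ) (F : OmegaK R ℓ) : LAgK a (-F) = -(LAgK a F) := by
  funext T; by_cases h : a ∈ T <;> simp [LAgK, h]

lemma dAgK_sub (a : Fin ℓ) (F G : OmegaK R ℓ) :
    dAgK a (F - G) = dAgK a F - dAgK a G := by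
  rw [sub_eq_add_neg, dAgK_add, dAgK_neg, sub_eq_add_neg]

lemma LAgK_sub (a : Fin ℓ) (F G : OmegaK R ℓ) :
    LAgK a (F - G) = LAgK a F - LAgK a G := by
  rw [sub_eq_add_neg, LAgK_add, LAgK_neg, sub_eq_add_neg]

lemma dAgK_ite (a : Fin ℓ) (c : Prop) [Decidable c] (F : OmegaK R ℓ) :
    dAgK a (if c then F else 0) = if c then dAgK a F else 0 := by
  split <;> simp [dAgK_zero]

lemma LAgK_ite (a : Fin ℓ) (c : Prop) [Decidable c] (F : OmegaK R ℓ) :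
    LAgK a (if c then F else 0) = if c then LAgK a F else 0 := by
  split <;> simp [LAgK_zero]

lemma dAgK_sum {ι : Type*} (s : Finset ι) (a : Fin ℓ) (F : ι → OmegaK R ℓ) :
    dAgK a (∑ i ∈ s, F i) = ∑ i ∈ s, dAgK a (F i) := by
  classical
  induction s using Finset.induction_on with
  | empty => simp [dAgK_zero]
  | insert _ _ h ih => rw [Finset.sum_insert h, Finset.sum_insert h, dAgK_add, ih]

lemma LAgK_sum {ι : Type*} (s : Finset ι) (a : Fin ℓ) (F : ι → OmegaK R ℓ) :
    LAgK a (∑ i ∈ s, F i) = ∑ i ∈ s, LAgK a (F i) := by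
  classical
  induction s using Finset.induction_on with
  | empty => simp [LAgK_zero]
  | insert _ _ h ih => rw [Finset.sum_insert h, Finset.sum_insert h, LAgK_add, ih]

lemma dAgK_comp (φ : R →+ R) (a : Fin ℓ) (F : OmegaK R ℓ) :
    dAgK a (fun T => φ (F T)) = fun T => φ (dAgK a F T) := by
  funext T; by_cases h : a ∈ T <;>
    simp only [dAgK, h, if_true, if_false, ite_true, ite_false, map_zero, map_zsmul]

lemma LAgK_comp (φ : R →+ R) (a : Fin ℓ) (F : OmegaK R ℓ) :
    LAgK a (fun T => φ (F T)) = fun T => φ (LAgK a F T) := by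
  funext T; by_cases h : a ∈ T <;>
    simp only [LAgK, h, if_true, if_false, ite_true, ite_false, map_zero, map_zsmul]

variable {K : Type*} [Field K] [Algebra K R]

lemma dAgK_ksmul (a : Fin ℓ) (k : K) (F : OmegaK R ℓ) :
    dAgK a (k • F) = k • dAgK a F := by
  funext T; by_cases h : a ∈ T <;>
    simp [dAgK, h, zsmul_eq_mul, mul_smul_comm]

lemma LAgK_ksmul (a : Fin ℓ) (k : K) (F : OmegaK R ℓ) :
    LAgK a (k • F) = k • LAgK a F := by
  funext T; by_cases h : a ∈ T <;>
    simp [LAgK, h, zsmul_eq_mul, mul_smul_comm]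

end QKAux

section
open QuantumKoszul QKAux Finset
variable {R : Type*} [Ring R] {ℓ : ℕ}

lemma neg_one_pow_mul_self (n : ℕ) : ((-1:ℤ)^n) * ((-1:ℤ)^n) = 1 := by
  rw [← mul_pow]; norm_num

lemma dAgK_dAgK_self (a : Fin ℓ) (F : OmegaK R ℓ) : dAgK a (dAgK a F) = 0 := by
  funext T
  by_cases h : a ∈ T
  · simp [dAgK, h]
  · simp [dAgK, h]

lemma LAgK_LAgK_self (a : Fin ℓ) (F : OmegaK R ℓ) : LAgK a (LAgK a F) = 0 := by
  funext T
  by_cases h : a ∈ T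
  · simp [LAgK, h]
  · simp [LAgK, h]

lemma dAgK_swap (a b : Fin ℓ) (F : OmegaK R ℓ) :
    dAgK a (dAgK b F) = - dAgK b (dAgK a F) := by
  by_cases hab : a = b
  · subst hab; simp [dAgK_dAgK_self]
  · funext T
    by_cases ha : a ∈ T
    · by_cases hb : b ∈ T <;> simp [dAgK, ha, hb]
    · by_cases hb : b ∈ T
      · simp [dAgK, ha, hb, hab]
      · have hab' : b ∉ insert a T := by simp [hb, Ne.symm hab]
        have hba' : a ∉ insert b T := by simp [ha, hab]
        simp only [Pi.neg_apply, dAgK, if_neg ha, if_neg hb, if_neg hab', if_neg hba']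
        rw [Finset.insert_comm, sgn_insert a b T ha, sgn_insert b a T hb,
          smul_smul, smul_smul, ← neg_smul]
        congr 1
        rcases lt_or_gt_of_ne hab with h | h
        · rw [if_pos h, if_neg (asymm h)]; ring
        · rw [if_neg (asymm h), if_pos h]; ring

lemma LAgK_swap (a b : Fin ℓ) (F : OmegaK R ℓ) :
    LAgK a (LAgK b F) = - LAgK b (LAgK a F) := by
  by_cases hab : a = b
  · subst hab; simp [LAgK_LAgK_self]
  · funext T
    by_cases ha : a ∈ T
    · by_cases hb : b ∈ T
      · have hab' : b ∈ T.erase a := Finset.mem_erase.2 ⟨Ne.symm hab, hb⟩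
        have hba' : a ∈ T.erase b := Finset.mem_erase.2 ⟨hab, ha⟩
        simp only [Pi.neg_apply, LAgK, if_pos ha, if_pos hb, if_pos hab', if_pos hba']
        rw [Finset.erase_right_comm, sgn_erase a b T ha, sgn_erase b a T hb,
          smul_smul, smul_smul, ← neg_smul]
        congr 1
        rcases lt_or_gt_of_ne hab with h | h
        · rw [if_pos h, if_neg (asymm h)]; ring
        · rw [if_neg (asymm h), if_pos h]; ring
      · simp [LAgK, ha, hb, hab]
    · by_cases hb : b ∈ T <;> simp [LAgK, ha, hb, hab]

lemma dAgK_LAgK (a b : Fin ℓ) (F : OmegaK R ℓ) :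
    dAgK a (LAgK b F) + LAgK b (dAgK a F) = if a = b then F else 0 := by
  by_cases hab : a = b
  · subst hab
    rw [if_pos rfl]
    funext T
    by_cases h : a ∈ T
    · have h2 : a ∉ T.erase a := Finset.notMem_erase a T
      simp only [Pi.add_apply, dAgK, LAgK, if_pos h, if_neg h2, zero_add]
      rw [Finset.insert_erase h, sgn_erase a a T h, if_neg (lt_irrefl a), one_mul,
        smul_smul, neg_one_pow_mul_self, one_smul]
    · have h2 : a ∈ insert a T := Finset.mem_insert_self a T
      simp only [Pi.add_apply, dAgK, LAgK, if_neg h, if_pos h2, add_zero]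
      rw [Finset.erase_insert h, sgn_insert a a T h, if_neg (lt_irrefl a), one_mul,
        smul_smul, neg_one_pow_mul_self, one_smul]
  · rw [if_neg hab]
    funext T
    by_cases ha : a ∈ T
    · by_cases hb : b ∈ T
      · have h2 : a ∈ T.erase b := Finset.mem_erase.2 ⟨hab, ha⟩
        simp [dAgK, LAgK, ha, hb, h2]
      · simp [dAgK, LAgK, ha, hb]
    · by_cases hb : b ∈ T
      · have h2 : b ∈ insert a T := Finset.mem_insert_of_mem hb
        have h3 : a ∉ T.erase b := fun hc => ha (Finset.mem_of_mem_erase hc)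
        simp only [Pi.add_apply, dAgK, LAgK, if_neg ha, if_pos hb, if_pos h2, if_neg h3]
        rw [Finset.erase_insert_of_ne hab, sgn_insert a b T ha, sgn_erase b a T hb,
          smul_smul, smul_smul]
        rcases lt_or_gt_of_ne hab with h | h
        · rw [if_pos h, if_neg (asymm h)]; simp only [Pi.zero_apply]; module
        · rw [if_neg (asymm h), if_pos h]; simp only [Pi.zero_apply]; module
      · have h2 : b ∉ insert a T := by simp [hb, Ne.symm hab]
        simp [dAgK, LAgK, ha, hb, h2]

end

section
open QuantumKoszul QKAux Finset
variable {R : Type*} [Ring R] {ℓ : ℕ}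

/-- `L_c (D_p G) = δ_{pc} G - D_p (L_c G)` -/
lemma LAgK_dAgK (c p : Fin ℓ) (G : OmegaK R ℓ) :
    LAgK c (dAgK p G) = (if p = c then G else 0) - dAgK p (LAgK c G) :=
  eq_sub_of_add_eq (by rw [add_comm]; exact dAgK_LAgK p c G)

/-- `D_p (L_c G) = δ_{pc} G - L_c (D_p G)` -/
lemma dAgK_LAgK' (p c : Fin ℓ) (G : OmegaK R ℓ) :
    dAgK p (LAgK c G) = (if p = c then G else 0) - LAgK c (dAgK p G) :=
  eq_sub_of_add_eq (dAgK_LAgK p c G)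

/-- `D_b D_p D_q = D_p D_q D_b` -/
lemma dAgK_rot (b p q : Fin ℓ) (F : OmegaK R ℓ) :
    dAgK b (dAgK p (dAgK q F)) = dAgK p (dAgK q (dAgK b F)) := by
  rw [dAgK_swap b p, dAgK_swap b q F, dAgK_neg, neg_neg]

/-- `L_c D_b D_p = D_p L_c D_b - δ_{pc} D_b` -/
lemma LDD (c b p : Fin ℓ) (F : OmegaK R ℓ) :
    LAgK c (dAgK b (dAgK p F)) =
      dAgK p (LAgK c (dAgK b F)) - (if p = c then dAgK b F else 0) := by
  rw [dAgK_swap b p F, LAgK_neg, LAgK_dAgK c p (dAgK b F)]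
  abel

/-- triple commutator `[L_c D_b, L_r D_p D_q]` -/
lemma comm_LD_LDD (c b r p q : Fin ℓ) (F : OmegaK R ℓ) :
    LAgK c (dAgK b (LAgK r (dAgK p (dAgK q F))))
      - LAgK r (dAgK p (dAgK q (LAgK c (dAgK b F)))) =
    (if b = r then LAgK c (dAgK p (dAgK q F)) else 0)
      - (if q = c then LAgK r (dAgK p (dAgK b F)) else 0)
      + (if p = c then LAgK r (dAgK q (dAgK b F)) else 0) := by
  have h1 : LAgK c (dAgK b (LAgK r (dAgK p (dAgK q F))))
      = (if b = r then LAgK c (dAgK p (dAgK q F)) else 0)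
        - LAgK c (LAgK r (dAgK p (dAgK q (dAgK b F)))) := by
    rw [dAgK_LAgK' b r (dAgK p (dAgK q F)), LAgK_sub, LAgK_ite,
      ← dAgK_rot b p q F]
  have h2 : dAgK q (LAgK c (dAgK b F))
      = (if q = c then dAgK b F else 0) - LAgK c (dAgK q (dAgK b F)) :=
    dAgK_LAgK' q c (dAgK b F)
  have h3 : dAgK p (dAgK q (LAgK c (dAgK b F)))
      = (if q = c then dAgK p (dAgK b F) else 0)
        - ((if p = c then dAgK q (dAgK b F) else 0)
            - LAgK c (dAgK p (dAgK q (dAgK b F)))) := by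
    rw [h2, dAgK_sub, dAgK_ite, dAgK_LAgK' p c (dAgK q (dAgK b F))]
  rw [h1, h3, LAgK_sub, LAgK_sub, LAgK_ite, LAgK_ite,
    LAgK_swap r c (dAgK p (dAgK q (dAgK b F)))]
  abel

lemma sum_symm_smul {K : Type*} [Field K] [CharZero K] {M : Type*}
    [AddCommGroup M] [Module K M] {n : ℕ} (C : Fin n → Fin n → K)
    (X : Fin n → Fin n → M) (hC : ∀ p q, C p q = C q p)
    (hX : ∀ p q, X p q = - X q p) :
    ∑ p, ∑ q, C p q • X p q = 0 := by
  have h : (∑ p, ∑ q, C p q • X p q) = - ∑ p, ∑ q, C p q • X p q := by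
    calc (∑ p, ∑ q, C p q • X p q)
        = ∑ p, ∑ q, -(C q p • X q p) :=
          Finset.sum_congr rfl fun p _ => Finset.sum_congr rfl fun q _ => by
            rw [hC p q, hX p q, smul_neg]
      _ = - ∑ p, ∑ q, (C q p • X q p) := by simp [Finset.sum_neg_distrib]
      _ = - ∑ p, ∑ q, C p q • X p q := by rw [Finset.sum_comm]
  have h2 : (2 : K) • (∑ p, ∑ q, C p q • X p q) = 0 := by
    rw [two_smul]
    nth_rewrite 1 [h]
    exact neg_add_cancel _
  calc ∑ p, ∑ q, C p q • X p q
      = (2:K)⁻¹ • ((2:K) • ∑ p, ∑ q, C p q • X p q) := by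
        rw [smul_smul, inv_mul_cancel₀ (two_ne_zero), one_smul]
    _ = 0 := by rw [h2, smul_zero]

end

namespace QKAux
open QuantumKoszul Finset
variable {R : Type*} [Ring R] {ℓ : ℕ}

def Mr (r : R) (G : OmegaK R ℓ) : OmegaK R ℓ := fun T => G T * r
def Nul (ν : R) (G : OmegaK R ℓ) : OmegaK R ℓ := fun T => ν * G T
def Rop (J : Fin ℓ → R) (F : OmegaK R ℓ) : OmegaK R ℓ := fun T => ∑ p, dAgK p F T * J p

variable {K : Type*} [Field K] [Algebra K R]

def Sop (f : Fin ℓ → Fin ℓ → Fin ℓ → K) (a : Fin ℓ) (F : OmegaK R ℓ) : OmegaK R ℓ :=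
  ∑ b, ∑ c, f a b c • LAgK c (dAgK b F)
def Uop (f : Fin ℓ → Fin ℓ → Fin ℓ → K) (F : OmegaK R ℓ) : OmegaK R ℓ :=
  ∑ p, (∑ q, f p q q) • dAgK p F
def Pop (f : Fin ℓ → Fin ℓ → Fin ℓ → K) (F : OmegaK R ℓ) : OmegaK R ℓ :=
  ∑ p, ∑ q, ∑ r, f p q r • LAgK r (dAgK p (dAgK q F))
def Wop (f : Fin ℓ → Fin ℓ → Fin ℓ → K) (F : OmegaK R ℓ) : OmegaK R ℓ :=
  (2:K)⁻¹ • Uop f F + (2:K)⁻¹ • Pop f F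
def Bph (φ : R →ₗ[K] R) (G : OmegaK R ℓ) : OmegaK R ℓ := fun T => φ (G T)

lemma dAgK_Mr (b : Fin ℓ) (r : R) (G : OmegaK R ℓ) :
    dAgK b (Mr r G) = Mr r (dAgK b G) :=
  dAgK_comp (AddMonoidHom.mulRight r) b G

lemma LAgK_Mr (b : Fin ℓ) (r : R) (G : OmegaK R ℓ) :
    LAgK b (Mr r G) = Mr r (LAgK b G) :=
  LAgK_comp (AddMonoidHom.mulRight r) b G

lemma Mr_sub (r : R) (G H : OmegaK R ℓ) : Mr r (G - H) = Mr r G - Mr r H := by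
  funext T; simp [Mr, sub_mul]

lemma Mr_zero (r : R) : Mr r (0 : OmegaK R ℓ) = 0 := by funext T; simp [Mr]

lemma Mr_ite (r : R) (c : Prop) [Decidable c] (G : OmegaK R ℓ) :
    Mr r (if c then G else 0) = if c then Mr r G else 0 := by
  split <;> simp [Mr_zero]

lemma Rop_eq (J : Fin ℓ → R) (F : OmegaK R ℓ) :
    Rop J F = ∑ p, Mr (J p) (dAgK p F) := by
  funext T; simp [Rop, Mr, Finset.sum_apply]

lemma Rop_add (J : Fin ℓ → R) (F G : OmegaK R ℓ) :
    Rop J (F + G) = Rop J F + Rop J G := by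
  funext T
  simp [Rop, dAgK_add, add_mul, Finset.sum_add_distrib]

lemma Rop_ksmul (J : Fin ℓ → R) (k : K) (F : OmegaK R ℓ) :
    Rop J (k • F) = k • Rop J F := by
  funext T
  simp [Rop, dAgK_ksmul, Finset.smul_sum, smul_mul_assoc]

lemma Rop_sum {ι : Type*} (s : Finset ι) (J : Fin ℓ → R) (G : ι → OmegaK R ℓ) :
    Rop J (∑ i ∈ s, G i) = ∑ i ∈ s, Rop J (G i) := by
  funext T
  simp [Rop, dAgK_sum, Finset.sum_apply, Finset.sum_mul]
  rw [Finset.sum_comm]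

/-- `L_c D_b` commuted past `ℛ`. -/
lemma LD_Rop (J : Fin ℓ → R) (c b : Fin ℓ) (F : OmegaK R ℓ) :
    LAgK c (dAgK b (Rop J F))
      = Rop J (LAgK c (dAgK b F)) - Mr (J c) (dAgK b F) := by
  rw [Rop_eq, dAgK_sum, LAgK_sum]
  have h : ∀ p : Fin ℓ, LAgK c (dAgK b (Mr (J p) (dAgK p F)))
      = Mr (J p) (dAgK p (LAgK c (dAgK b F)))
        - (if p = c then Mr (J p) (dAgK b F) else 0) := by
    intro p
    rw [dAgK_Mr, LAgK_Mr, LDD c b p F, Mr_sub, Mr_ite]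
  rw [Finset.sum_congr rfl fun p _ => h p, Finset.sum_sub_distrib,
    Finset.sum_ite_eq' Finset.univ c fun p => Mr (J p) (dAgK b F),
    if_pos (Finset.mem_univ c), Rop_eq]

end QKAux

namespace QKAux
open QuantumKoszul Finset
variable {R : Type*} [Ring R] {ℓ : ℕ}
variable {K : Type*} [Field K] [Algebra K R]

lemma Sop_add (f : Fin ℓ → Fin ℓ → Fin ℓ → K) (a : Fin ℓ) (F G : OmegaK R ℓ) :
    Sop f a (F + G) = Sop f a F + Sop f a G := by
  unfold Sop
  simp_rw [dAgK_add, LAgK_add, smul_add, Finset.sum_add_distrib]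

lemma Sop_ksmul (f : Fin ℓ → Fin ℓ → Fin ℓ → K) (a : Fin ℓ) (k : K) (F : OmegaK R ℓ) :
    Sop f a (k • F) = k • Sop f a F := by
  unfold Sop
  simp_rw [dAgK_ksmul, LAgK_ksmul, smul_comm _ k, Finset.smul_sum]

lemma Sop_sum {ι : Type*} (s : Finset ι) (f : Fin ℓ → Fin ℓ → Fin ℓ → K) (a : Fin ℓ)
    (G : ι → OmegaK R ℓ) :
    Sop f a (∑ i ∈ s, G i) = ∑ i ∈ s, Sop f a (G i) := by
  classical
  induction s using Finset.induction_on with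
  | empty => simp [Sop, dAgK_zero, LAgK_zero]
  | insert _ _ h ih => rw [Finset.sum_insert h, Finset.sum_insert h, Sop_add, ih]

lemma Uop_add (f : Fin ℓ → Fin ℓ → Fin ℓ → K) (F G : OmegaK R ℓ) :
    Uop f (F + G) = Uop f F + Uop f G := by
  unfold Uop; simp_rw [dAgK_add, smul_add, Finset.sum_add_distrib]

lemma Pop_add (f : Fin ℓ → Fin ℓ → Fin ℓ → K) (F G : OmegaK R ℓ) :
    Pop f (F + G) = Pop f F + Pop f G := by
  unfold Pop; simp_rw [dAgK_add, LAgK_add, smul_add, Finset.sum_add_distrib]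

lemma Pop_ksmul (f : Fin ℓ → Fin ℓ → Fin ℓ → K) (k : K) (F : OmegaK R ℓ) :
    Pop f (k • F) = k • Pop f F := by
  unfold Pop
  simp_rw [dAgK_ksmul, LAgK_ksmul, smul_comm _ k, Finset.smul_sum]

lemma Pop_sum {ι : Type*} (s : Finset ι) (f : Fin ℓ → Fin ℓ → Fin ℓ → K)
    (G : ι → OmegaK R ℓ) :
    Pop f (∑ i ∈ s, G i) = ∑ i ∈ s, Pop f (G i) := by
  classical
  induction s using Finset.induction_on with
  | empty => simp [Pop, dAgK_zero, LAgK_zero]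
  | insert _ _ h ih => rw [Finset.sum_insert h, Finset.sum_insert h, Pop_add, ih]

lemma Wop_add (f : Fin ℓ → Fin ℓ → Fin ℓ → K) (F G : OmegaK R ℓ) :
    Wop f (F + G) = Wop f F + Wop f G := by
  unfold Wop; rw [Uop_add, Pop_add, smul_add, smul_add]; abel

/-- composition with a `K`-linear endomorphism of `R` commutes with everything -/
lemma Bph_dAgK (φ : R →ₗ[K] R) (a : Fin ℓ) (G : OmegaK R ℓ) :
    dAgK a (Bph φ G) = Bph φ (dAgK a G) :=
  dAgK_comp φ.toAddMonoidHom a G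

lemma Bph_LAgK (φ : R →ₗ[K] R) (a : Fin ℓ) (G : OmegaK R ℓ) :
    LAgK a (Bph φ G) = Bph φ (LAgK a G) :=
  LAgK_comp φ.toAddMonoidHom a G

lemma Bph_add (φ : R →ₗ[K] R) (F G : OmegaK R ℓ) :
    Bph φ (F + G) = Bph φ F + Bph φ G := by
  funext T; simp [Bph]

lemma Bph_ksmul (φ : R →ₗ[K] R) (k : K) (G : OmegaK R ℓ) :
    Bph φ (k • G) = k • Bph φ G := by
  funext T; simp [Bph]

lemma Bph_sum {ι : Type*} (s : Finset ι) (φ : R →ₗ[K] R) (G : ι → OmegaK R ℓ) :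
    Bph φ (∑ i ∈ s, G i) = ∑ i ∈ s, Bph φ (G i) := by
  funext T; simp [Bph, Finset.sum_apply]

lemma Bph_Sop (φ : R →ₗ[K] R) (f : Fin ℓ → Fin ℓ → Fin ℓ → K) (a : Fin ℓ)
    (G : OmegaK R ℓ) : Sop f a (Bph φ G) = Bph φ (Sop f a G) := by
  unfold Sop
  simp_rw [Bph_dAgK, Bph_LAgK, ← Bph_ksmul, ← Bph_sum]

lemma Bph_Uop (φ : R →ₗ[K] R) (f : Fin ℓ → Fin ℓ → Fin ℓ → K) (G : OmegaK R ℓ) :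
    Uop f (Bph φ G) = Bph φ (Uop f G) := by
  unfold Uop; simp_rw [Bph_dAgK, ← Bph_ksmul, ← Bph_sum]

lemma Bph_Pop (φ : R →ₗ[K] R) (f : Fin ℓ → Fin ℓ → Fin ℓ → K) (G : OmegaK R ℓ) :
    Pop f (Bph φ G) = Bph φ (Pop f G) := by
  unfold Pop; simp_rw [Bph_dAgK, Bph_LAgK, ← Bph_ksmul, ← Bph_sum]

lemma Bph_Wop (φ : R →ₗ[K] R) (f : Fin ℓ → Fin ℓ → Fin ℓ → K) (G : OmegaK R ℓ) :
    Wop f (Bph φ G) = Bph φ (Wop f G) := by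
  unfold Wop; rw [Bph_Uop, Bph_Pop, ← Bph_ksmul, ← Bph_ksmul, ← Bph_add]

/-- rotation of four independent sums -/
lemma sum_rot4 {M : Type*} [AddCommMonoid M] {ι1 ι2 ι3 ι4 : Type*}
    [Fintype ι1] [Fintype ι2] [Fintype ι3] [Fintype ι4]
    (g : ι1 → ι2 → ι3 → ι4 → M) :
    ∑ b, ∑ c, ∑ p, ∑ q, g b c p q = ∑ c, ∑ p, ∑ q, ∑ b, g b c p q := by
  rw [Finset.sum_comm]
  refine Finset.sum_congr rfl fun c _ => ?_
  rw [Finset.sum_comm]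
  refine Finset.sum_congr rfl fun p _ => ?_
  exact Finset.sum_comm

lemma sum_rot3 {M : Type*} [AddCommMonoid M] {ι1 ι2 ι3 : Type*}
    [Fintype ι1] [Fintype ι2] [Fintype ι3]
    (g : ι1 → ι2 → ι3 → M) :
    ∑ b, ∑ c, ∑ p, g b c p = ∑ c, ∑ p, ∑ b, g b c p := by
  rw [Finset.sum_comm]
  refine Finset.sum_congr rfl fun c _ => ?_
  exact Finset.sum_comm

end QKAux

namespace QKAux
open Finset
variable {K : Type*} [Field K] {ℓ : ℕ}

/-- `tr(ad_{[a,b]}) = 0` -/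
lemma trace_id (f : Fin ℓ → Fin ℓ → Fin ℓ → K)
    (hfanti : ∀ a b c, f a b c = - f b a c)
    (hfjac : ∀ a b c d,
      (∑ e, (f a b e * f e c d + f b c e * f e a d + f c a e * f e b d)) = 0)
    (a b : Fin ℓ) : (∑ c, f a b c * (∑ q, f c q q)) = 0 := by
  have h0 : (∑ q, ∑ e, (f a b e * f e q q + f b q e * f e a q + f q a e * f e b q))
      = 0 := by
    rw [Finset.sum_congr rfl fun q _ => hfjac a b q q, Finset.sum_const_zero]
  simp only [Finset.sum_add_distrib] at h0
  have hswap : (∑ q, ∑ e, f b q e * f e a q) = ∑ q, ∑ e, f a q e * f e b q := by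
    rw [Finset.sum_comm]
    refine Finset.sum_congr rfl fun x _ => Finset.sum_congr rfl fun y _ => ?_
    rw [hfanti b y x, hfanti x a y]
    ring
  have hsecond : (∑ q, ∑ e, f q a e * f e b q) = - ∑ q, ∑ e, f a q e * f e b q := by
    rw [← Finset.sum_neg_distrib]
    refine Finset.sum_congr rfl fun q _ => ?_
    rw [← Finset.sum_neg_distrib]
    refine Finset.sum_congr rfl fun e _ => ?_
    rw [hfanti q a e]
    ring
  have hX : (∑ q, ∑ e, f a b e * f e q q) = 0 := by
    linear_combination h0 - hswap - hsecond
  calc (∑ c, f a b c * (∑ q, f c q q)) = ∑ c, ∑ q, f a b c * f c q q := by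
        simp_rw [Finset.mul_sum]
    _ = ∑ q, ∑ e, f a b e * f e q q := Finset.sum_comm
    _ = 0 := hX

/-- symmetry in `(p,q)` of the total coefficient -/
lemma Csym (f : Fin ℓ → Fin ℓ → Fin ℓ → K)
    (hfanti : ∀ a b c, f a b c = - f b a c)
    (hfjac : ∀ a b c d,
      (∑ e, (f a b e * f e c d + f b c e * f e a d + f c a e * f e b d)) = 0)
    (a r p q : Fin ℓ) :
    ((∑ b, f a b r * f p q b) - (∑ c, f a q c * f p c r) + (∑ c, f a q c * f c p r))
      = ((∑ b, f a b r * f q p b) - (∑ c, f a p c * f q c r)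
          + (∑ c, f a p c * f c q r)) := by
  rw [← sub_eq_zero]
  have hmerge : ((∑ b, f a b r * f p q b) - (∑ c, f a q c * f p c r)
        + (∑ c, f a q c * f c p r))
      - ((∑ b, f a b r * f q p b) - (∑ c, f a p c * f q c r)
        + (∑ c, f a p c * f c q r))
      = ∑ e, (-2 : K) * (f p q e * f e a r + f q a e * f e p r + f a p e * f e q r) := by
    simp only [← Finset.sum_sub_distrib, ← Finset.sum_add_distrib]
    refine Finset.sum_congr rfl fun e _ => ?_
    rw [hfanti q p e, hfanti p e r, hfanti q e r, hfanti e a r, hfanti q a e]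
    ring
  rw [hmerge, ← Finset.mul_sum, hfjac p q a r, mul_zero]

end QKAux

namespace QKAux
open QuantumKoszul Finset
variable {R : Type*} [Ring R] {ℓ : ℕ}
variable {K : Type*} [Field K] [Algebra K R]

lemma sum_rot5 {M : Type*} [AddCommMonoid M] {ι1 ι2 ι3 ι4 ι5 : Type*}
    [Fintype ι1] [Fintype ι2] [Fintype ι3] [Fintype ι4] [Fintype ι5]
    (g : ι1 → ι2 → ι3 → ι4 → ι5 → M) :
    ∑ b, ∑ c, ∑ p, ∑ q, ∑ r, g b c p q r
      = ∑ c, ∑ p, ∑ q, ∑ r, ∑ b, g b c p q r := by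
  rw [Finset.sum_comm]
  refine Finset.sum_congr rfl fun c _ => ?_
  rw [Finset.sum_comm]
  refine Finset.sum_congr rfl fun p _ => ?_
  rw [Finset.sum_comm]
  refine Finset.sum_congr rfl fun q _ => ?_
  exact Finset.sum_comm

lemma interchange3 {M : Type*} [AddCommMonoid M] [Module K M]
    {ι1 ι2 ι3 : Type*} [Fintype ι1] [Fintype ι2] [Fintype ι3]
    (k1 : ι1 → ι2 → K) (k2 : ι3 → K) (Y : ι1 → ι2 → ι3 → M) :
    ∑ b, ∑ c, k1 b c • ∑ p, k2 p • Y b c p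
      = ∑ p, k2 p • ∑ b, ∑ c, k1 b c • Y b c p := by
  simp_rw [Finset.smul_sum]
  conv_rhs => rw [sum_rot3 (fun p b c => k2 p • k1 b c • Y b c p)]
  exact Finset.sum_congr rfl fun b _ => Finset.sum_congr rfl fun c _ =>
    Finset.sum_congr rfl fun p _ => smul_comm _ _ _

lemma interchange23 {M : Type*} [AddCommMonoid M] [Module K M]
    {ι1 ι2 ι3 ι4 ι5 : Type*}
    [Fintype ι1] [Fintype ι2] [Fintype ι3] [Fintype ι4] [Fintype ι5]
    (k1 : ι1 → ι2 → K) (k2 : ι3 → ι4 → ι5 → K) (Y : ι1 → ι2 → ι3 → ι4 → ι5 → M) :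
    ∑ b, ∑ c, k1 b c • ∑ p, ∑ q, ∑ r, k2 p q r • Y b c p q r
      = ∑ p, ∑ q, ∑ r, k2 p q r • ∑ b, ∑ c, k1 b c • Y b c p q r := by
  simp_rw [Finset.smul_sum]
  conv_rhs => rw [sum_rot5 (fun p q r b c => k2 p q r • k1 b c • Y b c p q r)]
  conv_rhs => rw [sum_rot5 (fun q r b c p => k2 p q r • k1 b c • Y b c p q r)]
  conv_rhs => rw [sum_rot5 (fun r b c p q => k2 p q r • k1 b c • Y b c p q r)]
  exact Finset.sum_congr rfl fun b _ => Finset.sum_congr rfl fun c _ =>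
    Finset.sum_congr rfl fun p _ => Finset.sum_congr rfl fun q _ =>
      Finset.sum_congr rfl fun r _ => smul_comm _ _ _

lemma comm_S_Uop (f : Fin ℓ → Fin ℓ → Fin ℓ → K) (a : Fin ℓ)
    (hg : ∀ b : Fin ℓ, (∑ c, f a b c * (∑ q, f c q q)) = 0) (F : OmegaK R ℓ) :
    Sop f a (Uop f F) = Uop f (Sop f a F) := by
  have h1 : ∀ b c : Fin ℓ, LAgK c (dAgK b (Uop f F))
      = (∑ p, (∑ q, f p q q) • dAgK p (LAgK c (dAgK b F)))
        - (∑ q, f c q q) • dAgK b F := by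
    intro b c
    unfold Uop
    rw [dAgK_sum, LAgK_sum]
    simp_rw [dAgK_ksmul, LAgK_ksmul, LDD c b _ F, smul_sub, Finset.sum_sub_distrib]
    congr 1
    simp_rw [smul_ite, smul_zero]
    rw [Finset.sum_ite_eq' Finset.univ c fun p => (∑ q, f p q q) • dAgK b F,
      if_pos (Finset.mem_univ c)]
  have h2 : Uop f (Sop f a F)
      = ∑ b, ∑ c, f a b c • ∑ p, (∑ q, f p q q) • dAgK p (LAgK c (dAgK b F)) := by
    unfold Uop Sop
    simp_rw [dAgK_sum, dAgK_ksmul]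
    exact (interchange3 (fun b c => f a b c) (fun p => (∑ q, f p q q))
      (fun b c p => dAgK p (LAgK c (dAgK b F)))).symm
  calc Sop f a (Uop f F)
      = ∑ b, ∑ c, (f a b c • ∑ p, (∑ q, f p q q) • dAgK p (LAgK c (dAgK b F))
          - (f a b c * (∑ q, f c q q)) • dAgK b F) := by
        unfold Sop
        refine Finset.sum_congr rfl fun b _ => Finset.sum_congr rfl fun c _ => ?_
        rw [h1 b c, smul_sub, smul_smul]
    _ = (∑ b, ∑ c, f a b c • ∑ p, (∑ q, f p q q) • dAgK p (LAgK c (dAgK b F)))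
          - ∑ b, ∑ c, (f a b c * (∑ q, f c q q)) • dAgK b F := by
        simp_rw [Finset.sum_sub_distrib]
    _ = ∑ b, ∑ c, f a b c • ∑ p, (∑ q, f p q q) • dAgK p (LAgK c (dAgK b F)) := by
        rw [show (∑ b, ∑ c : Fin ℓ, (f a b c * (∑ q, f c q q)) • dAgK b F) = 0 from
          Finset.sum_eq_zero fun b _ => by rw [← Finset.sum_smul, hg b, zero_smul],
          sub_zero]
    _ = Uop f (Sop f a F) := h2.symm

end QKAux

namespace QKAux
open QuantumKoszul Finset
variable {R : Type*} [Ring R] {ℓ : ℕ}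
variable {K : Type*} [Field K] [CharZero K] [Algebra K R]

lemma sum_ite_shared {ι M : Type*} [AddCommMonoid M] (s : Finset ι) (c : Prop)
    [Decidable c] (Z : ι → M) :
    (∑ r ∈ s, if c then Z r else 0) = if c then ∑ r ∈ s, Z r else 0 := by
  split <;> simp

set_option maxHeartbeats 1000000 in
lemma comm_S_Pop (f : Fin ℓ → Fin ℓ → Fin ℓ → K) (a : Fin ℓ)
    (hfanti : ∀ a b c, f a b c = - f b a c)
    (hfjac : ∀ a b c d,
      (∑ e, (f a b e * f e c d + f b c e * f e a d + f c a e * f e b d)) = 0)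
    (F : OmegaK R ℓ) :
    Sop f a (Pop f F) = Pop f (Sop f a F) := by
  have hc : ∀ b c p q r : Fin ℓ,
      LAgK c (dAgK b (LAgK r (dAgK p (dAgK q F))))
        = LAgK r (dAgK p (dAgK q (LAgK c (dAgK b F))))
          + ((if b = r then LAgK c (dAgK p (dAgK q F)) else 0)
            - (if q = c then LAgK r (dAgK p (dAgK b F)) else 0)
            + (if p = c then LAgK r (dAgK q (dAgK b F)) else 0)) :=
    fun b c p q r => sub_eq_iff_eq_add'.mp (comm_LD_LDD c b r p q F)
  have hPop : (∑ b, ∑ c, f a b c • ∑ p, ∑ q, ∑ r, f p q r •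
      LAgK r (dAgK p (dAgK q (LAgK c (dAgK b F))))) = Pop f (Sop f a F) := by
    unfold Pop Sop
    simp_rw [dAgK_sum, LAgK_sum, dAgK_ksmul, LAgK_ksmul]
    exact interchange23 (fun b c => f a b c) (fun p q r => f p q r)
      (fun b c p q r => LAgK r (dAgK p (dAgK q (LAgK c (dAgK b F)))))
  have hE1 : (∑ b, ∑ c, f a b c • ∑ p, ∑ q, f p q b • LAgK c (dAgK p (dAgK q F)))
      = ∑ r, ∑ p, ∑ q, (∑ b, f a b r * f p q b) • LAgK r (dAgK p (dAgK q F)) := by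
    simp_rw [Finset.smul_sum, smul_smul]
    rw [sum_rot4 (fun b c p q => (f a b c * f p q b) • LAgK c (dAgK p (dAgK q F)))]
    simp_rw [Finset.sum_smul]
  have hE2 : (∑ b, ∑ c, f a b c • ∑ p, ∑ r, f p c r • LAgK r (dAgK p (dAgK b F)))
      = ∑ r, ∑ p, ∑ q, (∑ c, f a q c * f p c r) • LAgK r (dAgK p (dAgK q F)) := by
    simp_rw [Finset.smul_sum, smul_smul]
    rw [sum_rot4 (fun b c p r => (f a b c * f p c r) • LAgK r (dAgK p (dAgK b F)))]
    rw [sum_rot4 (fun c p r b => (f a b c * f p c r) • LAgK r (dAgK p (dAgK b F)))]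
    rw [Finset.sum_comm]
    simp_rw [Finset.sum_smul]
  have hE3 : (∑ b, ∑ c, f a b c • ∑ q, ∑ r, f c q r • LAgK r (dAgK q (dAgK b F)))
      = ∑ r, ∑ p, ∑ q, (∑ c, f a q c * f c p r) • LAgK r (dAgK p (dAgK q F)) := by
    simp_rw [Finset.smul_sum, smul_smul]
    rw [sum_rot4 (fun b c q r => (f a b c * f c q r) • LAgK r (dAgK q (dAgK b F)))]
    rw [sum_rot4 (fun c q r b => (f a b c * f c q r) • LAgK r (dAgK q (dAgK b F)))]
    rw [Finset.sum_comm]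
    simp_rw [Finset.sum_smul]
  have hzero : (∑ r, ∑ p, ∑ q,
        (∑ b, f a b r * f p q b) • LAgK r (dAgK p (dAgK q F)))
      - (∑ r, ∑ p, ∑ q,
        (∑ c, f a q c * f p c r) • LAgK r (dAgK p (dAgK q F)))
      + (∑ r, ∑ p, ∑ q,
        (∑ c, f a q c * f c p r) • LAgK r (dAgK p (dAgK q F))) = 0 := by
    simp_rw [← Finset.sum_sub_distrib, ← Finset.sum_add_distrib, ← sub_smul,
      ← add_smul]
    refine Finset.sum_eq_zero fun r _ => ?_
    exact sum_symm_smul _ _ (fun p q => Csym f hfanti hfjac a r p q)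
      (fun p q => by rw [dAgK_swap p q F, LAgK_neg])
  have inner : ∀ b c : Fin ℓ, LAgK c (dAgK b (Pop f F))
      = (∑ p, ∑ q, ∑ r, f p q r • LAgK r (dAgK p (dAgK q (LAgK c (dAgK b F)))))
        + ((∑ p, ∑ q, f p q b • LAgK c (dAgK p (dAgK q F)))
          - (∑ p, ∑ r, f p c r • LAgK r (dAgK p (dAgK b F)))
          + (∑ q, ∑ r, f c q r • LAgK r (dAgK q (dAgK b F)))) := by
    intro b c
    unfold Pop
    simp_rw [dAgK_sum, LAgK_sum, dAgK_ksmul, LAgK_ksmul, hc]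
    simp_rw [smul_add, smul_sub, smul_ite, smul_zero, Finset.sum_add_distrib,
      Finset.sum_sub_distrib]
    simp_rw [sum_ite_shared, Finset.sum_ite_eq, Finset.sum_ite_eq',
      Finset.mem_univ, if_true]
  calc Sop f a (Pop f F)
      = (∑ b, ∑ c, f a b c • ∑ p, ∑ q, ∑ r, f p q r •
            LAgK r (dAgK p (dAgK q (LAgK c (dAgK b F)))))
        + (((∑ b, ∑ c, f a b c • ∑ p, ∑ q, f p q b • LAgK c (dAgK p (dAgK q F)))
          - (∑ b, ∑ c, f a b c • ∑ p, ∑ r, f p c r • LAgK r (dAgK p (dAgK b F))))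
          + (∑ b, ∑ c, f a b c • ∑ q, ∑ r, f c q r • LAgK r (dAgK q (dAgK b F)))) := by
        unfold Sop
        simp_rw [inner, smul_add, smul_sub, Finset.sum_add_distrib,
          Finset.sum_sub_distrib]
    _ = Pop f (Sop f a F) := by
        rw [hPop, hE1, hE2, hE3, show ((∑ r, ∑ p, ∑ q,
            (∑ b, f a b r * f p q b) • LAgK r (dAgK p (dAgK q F)))
          - (∑ r, ∑ p, ∑ q,
            (∑ c, f a q c * f p c r) • LAgK r (dAgK p (dAgK q F))))
          + (∑ r, ∑ p, ∑ q,
            (∑ c, f a q c * f c p r) • LAgK r (dAgK p (dAgK q F))) = 0 from hzero,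
          add_zero]

end QKAux

namespace QKAux
open QuantumKoszul Finset
variable {R : Type*} [Ring R] {ℓ : ℕ}
variable {K : Type*} [Field K] [CharZero K] [Algebra K R]

lemma Nul_add (ν : R) (F G : OmegaK R ℓ) : Nul ν (F + G) = Nul ν F + Nul ν G := by
  funext T; simp [Nul, mul_add]

lemma Nul_ksmul (ν : R) (k : K) (G : OmegaK R ℓ) : Nul ν (k • G) = k • Nul ν G := by
  funext T; simp [Nul, mul_smul_comm]

lemma Nul_sum {ι : Type*} (s : Finset ι) (ν : R) (G : ι → OmegaK R ℓ) :
    Nul ν (∑ i ∈ s, G i) = ∑ i ∈ s, Nul ν (G i) := by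
  funext T; simp [Nul, Finset.sum_apply, Finset.mul_sum]

lemma dAgK_Nul (a : Fin ℓ) (ν : R) (G : OmegaK R ℓ) :
    dAgK a (Nul ν G) = Nul ν (dAgK a G) :=
  dAgK_comp (AddMonoidHom.mulLeft ν) a G

lemma LAgK_Nul (a : Fin ℓ) (ν : R) (G : OmegaK R ℓ) :
    LAgK a (Nul ν G) = Nul ν (LAgK a G) :=
  LAgK_comp (AddMonoidHom.mulLeft ν) a G

lemma Sop_Nul (f : Fin ℓ → Fin ℓ → Fin ℓ → K) (a : Fin ℓ) (ν : R) (G : OmegaK R ℓ) :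
    Sop f a (Nul ν G) = Nul ν (Sop f a G) := by
  unfold Sop
  simp_rw [dAgK_Nul, LAgK_Nul, ← Nul_ksmul, ← Nul_sum]

lemma Bph_Nul (φ : R →ₗ[K] R) (ν : R) (hφν : ∀ x, φ (ν * x) = ν * φ x)
    (G : OmegaK R ℓ) : Bph φ (Nul ν G) = Nul ν (Bph φ G) := by
  funext T; simp [Bph, Nul, hφν]

lemma comm_S_Wop (f : Fin ℓ → Fin ℓ → Fin ℓ → K) (a : Fin ℓ)
    (hfanti : ∀ a b c, f a b c = - f b a c)
    (hfjac : ∀ a b c d,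
      (∑ e, (f a b e * f e c d + f b c e * f e a d + f c a e * f e b d)) = 0)
    (F : OmegaK R ℓ) :
    Sop f a (Wop f F) = Wop f (Sop f a F) := by
  unfold Wop
  rw [Sop_add, Sop_ksmul, Sop_ksmul,
    comm_S_Uop f a (fun b => trace_id f hfanti hfjac a b) F,
    comm_S_Pop f a hfanti hfjac F]

lemma comm_B_R (J : Fin ℓ → R) (φ : R →ₗ[K] R) (f : Fin ℓ → Fin ℓ → Fin ℓ → K)
    (a : Fin ℓ)
    (hkey : ∀ (x : R) (b : Fin ℓ), φ (x * J b) = φ x * J b + ∑ c, f a b c • (x * J c))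
    (F : OmegaK R ℓ) :
    Bph φ (Rop J F) = Rop J (Bph φ F) + ∑ b, ∑ c, f a b c • Mr (J c) (dAgK b F) := by
  funext T
  simp only [Bph, Rop, Pi.add_apply, Finset.sum_apply, Pi.smul_apply, Mr]
  rw [map_sum]
  simp_rw [hkey]
  rw [Finset.sum_add_distrib]
  congr 1
  refine Finset.sum_congr rfl fun p _ => ?_
  rw [Bph_dAgK]
  rfl

lemma comm_S_R (J : Fin ℓ → R) (f : Fin ℓ → Fin ℓ → Fin ℓ → K) (a : Fin ℓ)
    (F : OmegaK R ℓ) :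
    Sop f a (Rop J F)
      = Rop J (Sop f a F) - ∑ b, ∑ c, f a b c • Mr (J c) (dAgK b F) := by
  unfold Sop
  simp_rw [LD_Rop, smul_sub, Finset.sum_sub_distrib]
  congr 1
  simp_rw [Rop_sum, Rop_ksmul]

lemma assembly (J : Fin ℓ → R) (ν : R) (φ : R →ₗ[K] R)
    (f : Fin ℓ → Fin ℓ → Fin ℓ → K) (a : Fin ℓ)
    (hfanti : ∀ a b c, f a b c = - f b a c)
    (hfjac : ∀ a b c d,
      (∑ e, (f a b e * f e c d + f b c e * f e a d + f c a e * f e b d)) = 0)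
    (hkey : ∀ (x : R) (b : Fin ℓ), φ (x * J b) = φ x * J b + ∑ c, f a b c • (x * J c))
    (hφν : ∀ x, φ (ν * x) = ν * φ x) (F : OmegaK R ℓ) :
    Bph φ (Rop J F + Nul ν (Wop f F)) + Sop f a (Rop J F + Nul ν (Wop f F))
      = Rop J (Bph φ F + Sop f a F) + Nul ν (Wop f (Bph φ F + Sop f a F)) := by
  rw [Bph_add, Sop_add, comm_B_R J φ f a hkey F, comm_S_R J f a F,
    Bph_Nul φ ν hφν, Sop_Nul, ← Bph_Wop, comm_S_Wop f a hfanti hfjac F,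
    Rop_add, Wop_add, Nul_add]
  abel

end QKAux


/-- **Cartan-type commutation for the quantum Koszul differential.**
For every `X ∈ g`, the deformed representation operator
`ρ_X(fv) = f·ad_X(v) + ν⁻¹[𝐉(X), f]_⋆ · v` commutes with the quantum Koszul
differential `∂̂ = ℛ + ν(½u - q)`:  `ρ_X ∂̂ - ∂̂ ρ_X = 0`.
(In the paper this follows from the Cartan homotopy formula `ρ_X = i_X δ̂ + δ̂ i_X`
together with `δ̂ ∂̂ + ∂̂ δ̂ = 0` and `[i_X, ∂̂] = 0`.)  Here `R` is the star-product
algebra `C^∞(M)[[ν]]` with central regular formal parameter `ν`, `𝐉` a quantum moment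
map, and `ν · brR a x = 𝐉_a ⋆ x - x ⋆ 𝐉_a` defines `brR a = ν⁻¹ ad_⋆(𝐉_a)`. -/
theorem deformed_representation_commutes_with_quantum_koszul
    (K : Type*) [Field K] [CharZero K]
    (R : Type*) [Ring R] [Algebra K R] (ℓ : ℕ)
    -- the central, regular formal parameter `ν`
    (nu : R) (hnu : ∀ x : R, nu * x = x * nu)
    (hreg : ∀ x : R, nu * x = 0 → x = 0)
    -- structure constants of `g`
    (f : Fin ℓ → Fin ℓ → Fin ℓ → K)
    (hfanti : ∀ a b c, f a b c = - f b a c)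
    (hfjac : ∀ a b c d,
      (∑ e, (f a b e * f e c d + f b c e * f e a d + f c a e * f e b d)) = 0)
    -- the quantum moment map
    (J : Fin ℓ → R)
    (hJ : ∀ a b, J a * J b - J b * J a = nu * ∑ c, f a b c • J c)
    -- `brR a = ν⁻¹ ad_⋆(𝐉_a)`
    (brR : Fin ℓ → R →ₗ[K] R)
    (hbrR : ∀ (a : Fin ℓ) (x : R), nu * brR a x = J a * x - x * J a) :
    (let ℛ : OmegaK R ℓ → OmegaK R ℓ :=                -- "right multiplication"
      fun F T => ∑ a, dAgK a F T * J a
     let u : OmegaK R ℓ → OmegaK R ℓ :=                -- "unimodular term"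
      fun F => ∑ a, (∑ b, f a b b) • dAgK a F
     let q : OmegaK R ℓ → OmegaK R ℓ :=                -- "quadratic term"
      fun F => - ((2 : K)⁻¹ •
        (∑ a, ∑ b, ∑ c, f a b c • LAgK c (dAgK a (dAgK b F))))
     let kosQ : OmegaK R ℓ → OmegaK R ℓ :=             -- the quantum Koszul differential
      fun F T => ℛ F T + nu * ((2 : K)⁻¹ • u F - q F) T
     let ρ : Fin ℓ → OmegaK R ℓ → OmegaK R ℓ :=        -- the deformed representation
      fun a F => (fun T => brR a (F T)) + ∑ b, ∑ c, f a b c • LAgK c (dAgK b F)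
     ∀ (a : Fin ℓ) (F : OmegaK R ℓ), ρ a (kosQ F) = kosQ (ρ a F)) := by
  intro Rop' uop' qop' kosQ' rho' a F
  have cancel : ∀ y z : R, nu * y = nu * z → y = z := by
    intro y z h
    have h2 : nu * (y - z) = 0 := by rw [mul_sub, h, sub_self]
    exact sub_eq_zero.mp (hreg _ h2)
  have hbnu : ∀ x : R, brR a (nu * x) = nu * brR a x := by
    intro x
    refine cancel _ _ ?_
    rw [hbrR a (nu * x)]
    calc J a * (nu * x) - nu * x * J a = nu * (J a * x - x * J a) := by
          rw [← mul_assoc, ← hnu (J a), mul_assoc, mul_assoc, mul_sub]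
      _ = nu * (nu * brR a x) := by rw [hbrR a x]
  have hkey : ∀ (x : R) (b : Fin ℓ),
      brR a (x * J b) = brR a x * J b + ∑ c, f a b c • (x * J c) := by
    intro x b
    have h10 : nu * ∑ c, f a b c • (x * J c) = x * (J a * J b - J b * J a) := by
      rw [hJ a b, ← mul_assoc, ← hnu x, mul_assoc, Finset.mul_sum, Finset.mul_sum,
        Finset.mul_sum]
      refine Finset.sum_congr rfl fun c _ => ?_
      simp only [mul_smul_comm]
    refine cancel _ _ ?_
    rw [hbrR a (x * J b), mul_add,
      show nu * ((brR a) x * J b) = (nu * (brR a) x) * J b from (mul_assoc _ _ _).symm,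
      hbrR a x, h10]
    noncomm_ring
  have hrho : ∀ G : OmegaK R ℓ, rho' a G = QKAux.Bph (brR a) G + QKAux.Sop f a G :=
    fun _ => rfl
  have hW : ∀ G : OmegaK R ℓ, ((2:K)⁻¹ • uop' G - qop' G) = QKAux.Wop f G := by
    intro G
    show (2:K)⁻¹ • QKAux.Uop f G - -((2:K)⁻¹ • QKAux.Pop f G) = QKAux.Wop f G
    rw [sub_neg_eq_add]
    rfl
  have hkos : ∀ G : OmegaK R ℓ,
      kosQ' G = QKAux.Rop J G + QKAux.Nul nu (QKAux.Wop f G) := by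
    intro G
    funext T
    show Rop' G T + nu * (((2:K)⁻¹ • uop' G - qop' G) T) = _
    rw [hW G]
    rfl
  rw [hkos F, hrho (QKAux.Rop J F + QKAux.Nul nu (QKAux.Wop f F)), hrho F,
    hkos (QKAux.Bph (brR a) F + QKAux.Sop f a F)]
  exact QKAux.assembly J nu (brR a) f a hfanti hfjac hkey hbnu F
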